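/- Define V : ℝ² → ℝ by V(χ,φ) = 2|f₂(χ,φ)|² − 6|f₁(χ,φ)|², where f₁ = e^{−φ/2}(−iχ + e^{φ} + 1)/(2√2) and f₂ = e^{−φ/2}(−iχ + e^{φ} − 1)/(2√2). Then (i) V(χ,φ) = −(1/2)(χ² e^{−φ} + e^{φ} + e^{−φ} + 4) for all χ, φ; (ii) the partial derivatives ∂V/∂χ and ∂V/∂φ vanish simultaneously at (χ,φ) if and only if (χ,φ) = (0,0); and (iii) V(0,0) = −3. -/

import Mathlib

noncomputable def f₁ (χ φ : ℝ) : ℂ :=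
  (Real.exp (-φ / 2) : ℂ) * (-(Complex.I * (χ : ℂ)) + (Real.exp φ : ℂ) + 1) /
    (2 * (Real.sqrt 2 : ℂ))

noncomputable def f₂ (χ φ : ℝ) : ℂ :=
  (Real.exp (-φ / 2) : ℂ) * (-(Complex.I * (χ : ℂ)) + (Real.exp φ : ℂ) - 1) /
    (2 * (Real.sqrt 2 : ℂ))

noncomputable def Vpot (χ φ : ℝ) : ℝ :=
  2 * ‖f₂ χ φ‖ ^ 2 - 6 * ‖f₁ χ φ‖ ^ 2

lemma Vpot_eq (χ φ : ℝ) :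
    Vpot χ φ = -(1 / 2) * (χ ^ 2 * Real.exp (-φ) + Real.exp φ + Real.exp (-φ) + 4) := by
  have he : Real.exp (-φ / 2) ^ 2 = Real.exp (-φ) := by
    rw [sq, ← Real.exp_add]; ring_nf
  have hee : Real.exp (-φ) * Real.exp φ = 1 := by
    rw [← Real.exp_add]; simp
  have habs : Complex.normSq (2 * (Real.sqrt 2 : ℂ)) = 8 := by
    have : ((2 : ℂ) * (Real.sqrt 2 : ℂ)) = ((2 * Real.sqrt 2 : ℝ) : ℂ) := by push_cast; ring
    rw [this, Complex.normSq_ofReal]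
    nlinarith [Real.sq_sqrt (show (0:ℝ) ≤ 2 by norm_num)]
  simp only [Vpot, f₁, f₂, map_div₀, div_pow, Complex.sq_norm, habs, Complex.normSq_apply,
    Complex.add_re, Complex.add_im, Complex.sub_re, Complex.sub_im,
    Complex.neg_re, Complex.neg_im, Complex.mul_re, Complex.mul_im,
    Complex.I_re, Complex.I_im, Complex.ofReal_re, Complex.ofReal_im,
    Complex.one_re, Complex.one_im]
  nlinarith [he, hee, Real.exp_pos φ, Real.exp_pos (-φ)]

lemma hderiv1 (χ φ : ℝ) : deriv (fun x : ℝ => Vpot x φ) χ = -χ * Real.exp (-φ) := by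
  have hfun : (fun x : ℝ => Vpot x φ)
      = fun x : ℝ => -(1 / 2) * (x ^ 2 * Real.exp (-φ) + Real.exp φ + Real.exp (-φ) + 4) := by
    funext x; exact Vpot_eq x φ
  rw [hfun]
  have h : HasDerivAt (fun x : ℝ =>
      -(1 / 2) * (x ^ 2 * Real.exp (-φ) + Real.exp φ + Real.exp (-φ) + 4))
      (-(1/2) * (2 * χ * Real.exp (-φ))) χ := by
    have := (((hasDerivAt_pow 2 χ).mul_const (Real.exp (-φ))).add_const
      (Real.exp φ)).add_const (Real.exp (-φ))
    have := (this.add_const 4).const_mul (-(1/2) : ℝ)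
    refine this.congr_deriv ?_; push_cast; ring
  rw [h.deriv]; ring

lemma hexpneg (φ : ℝ) : HasDerivAt (fun y : ℝ => Real.exp (-y)) (-Real.exp (-φ)) φ := by
  simpa using ((hasDerivAt_id φ).neg).exp

lemma hderiv2 (χ φ : ℝ) : deriv (fun y : ℝ => Vpot χ y) φ
    = -(1/2) * (-χ ^ 2 * Real.exp (-φ) + Real.exp φ - Real.exp (-φ)) := by
  have hfun : (fun y : ℝ => Vpot χ y)
      = fun y : ℝ => -(1 / 2) * (χ ^ 2 * Real.exp (-y) + Real.exp y + Real.exp (-y) + 4) := by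
    funext y; exact Vpot_eq χ y
  rw [hfun]
  have h : HasDerivAt (fun y : ℝ =>
      -(1 / 2) * (χ ^ 2 * Real.exp (-y) + Real.exp y + Real.exp (-y) + 4))
      (-(1/2) * (χ ^ 2 * (-Real.exp (-φ)) + Real.exp φ + (-Real.exp (-φ)))) φ := by
    exact ((((hexpneg φ).const_mul (χ^2)).add (Real.hasDerivAt_exp φ)).add
      (hexpneg φ) |>.add_const 4).const_mul (-(1/2) : ℝ)
  rw [h.deriv]; ring

theorem potential_closed_form_and_critical_point :
    (∀ χ φ : ℝ,
      Vpot χ φ =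
        -(1 / 2) * (χ ^ 2 * Real.exp (-φ) + Real.exp φ + Real.exp (-φ) + 4)) ∧
    (∀ χ φ : ℝ,
      (deriv (fun x : ℝ => Vpot x φ) χ = 0 ∧
       deriv (fun y : ℝ => Vpot χ y) φ = 0) ↔ (χ = 0 ∧ φ = 0)) ∧
    Vpot 0 0 = -3 := by
  refine ⟨Vpot_eq, ?_, by rw [Vpot_eq]; norm_num⟩
  intro χ φ
  rw [hderiv1, hderiv2]
  constructor
  · rintro ⟨h1, h2⟩
    have hx : χ = 0 := by
      have := Real.exp_pos (-φ)
      by_contra hχ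
      exact hχ (by nlinarith)
    subst hx
    have hφ : Real.exp φ = Real.exp (-φ) := by nlinarith
    have := Real.exp_injective hφ
    constructor
    · rfl
    · linarith
  · rintro ⟨h1, h2⟩
    subst h1; subst h2
    norm_num
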